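/- Let α > 0 and let u be of class C² on M̄, vanishing on the lateral boundary Γ_l = {0,L}×[−h,0] and on the bottom Γ_b = [0,L]×{−h}, satisfying the Robin condition ∂_z u(x,0) + α u(x,0) = 0 for all x ∈ [0,L], and with ∫_{−h}^0 u(x,z) dz = 0 for all x. Let Q denote the orthogonal complement of the vertical average, (Qg)(x,z) = g(x,z) − (1/h) ∫_{−h}^0 g(x,s) ds. Then the following cancellation identity holds: ∫_M ( u ∂_x u + w(u) ∂_z u ) · ( −Q ∂_{zz} u ) dM = −(2/h) ∫_M u(x,z) ∂_x u(x,z) ( α u(x,0) + ∂_z u(x,−h) ) dM. -/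

import Mathlib

open MeasureTheory Set intervalIntegral

/-- Partial derivative in the first (horizontal, `x`) variable. -/
noncomputable def pdx (f : ℝ × ℝ → ℝ) (p : ℝ × ℝ) : ℝ := fderiv ℝ f p (1, 0)

/-- Partial derivative in the second (vertical, `z`) variable. -/
noncomputable def pdz (f : ℝ × ℝ → ℝ) (p : ℝ × ℝ) : ℝ := fderiv ℝ f p (0, 1)

/-- The diagnostic vertical velocity `w(u)(x,z) = ∫_z^0 ∂ₓ u(x,s) ds`. -/
noncomputable def wOp (u : ℝ × ℝ → ℝ) (p : ℝ × ℝ) : ℝ := ∫ s in p.2..0, pdx u (p.1, s)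

/-- The open domain `M = (0,L) × (-h,0)`. -/
def dom (L h : ℝ) : Set (ℝ × ℝ) := Ioo 0 L ×ˢ Ioo (-h) 0

/-- The closed domain `M̄ = [0,L] × [-h,0]`. -/
def cdom (L h : ℝ) : Set (ℝ × ℝ) := Icc 0 L ×ˢ Icc (-h) 0

/-- The `L²(M)` norm. -/
noncomputable def l2 (L h : ℝ) (f : ℝ × ℝ → ℝ) : ℝ :=
  Real.sqrt (∫ p in dom L h, f p ^ 2)

/-- The `H¹(M)` norm. -/
noncomputable def h1n (L h : ℝ) (f : ℝ × ℝ → ℝ) : ℝ :=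
  Real.sqrt (l2 L h f ^ 2 + l2 L h (pdx f) ^ 2 + l2 L h (pdz f) ^ 2)

/-- The `H²(M)` norm. -/
noncomputable def h2n (L h : ℝ) (f : ℝ × ℝ → ℝ) : ℝ :=
  Real.sqrt (h1n L h f ^ 2 + l2 L h (pdx (pdx f)) ^ 2 + l2 L h (pdx (pdz f)) ^ 2
    + l2 L h (pdz (pdz f)) ^ 2)

/-- The orthogonal complement `Q` of the vertical averaging operator:
`(Q g)(x,z) = g(x,z) - (1/h) ∫_{-h}^0 g(x,s) ds`. -/
noncomputable def Qop (h : ℝ) (g : ℝ × ℝ → ℝ) (p : ℝ × ℝ) : ℝ :=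
  g p - (1 / h) * ∫ s in (-h)..(0:ℝ), g (p.1, s)

namespace Stmt18Aux

lemma hasDerivAt_slice_z {f : ℝ × ℝ → ℝ} (hf : Differentiable ℝ f) (x z : ℝ) :
    HasDerivAt (fun t => f (x, t)) (pdz f (x, z)) z := by
  have h1 : HasDerivAt (fun t : ℝ => ((x, t) : ℝ × ℝ)) ((0 : ℝ), (1 : ℝ)) z :=
    (hasDerivAt_const z x).prodMk (hasDerivAt_id z)
  exact (hf (x, z)).hasFDerivAt.comp_hasDerivAt z h1

lemma hasDerivAt_slice_x {f : ℝ × ℝ → ℝ} (hf : Differentiable ℝ f) (x z : ℝ) :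
    HasDerivAt (fun t => f (t, z)) (pdx f (x, z)) x := by
  have h1 : HasDerivAt (fun t : ℝ => ((t, z) : ℝ × ℝ)) ((1 : ℝ), (0 : ℝ)) x :=
    (hasDerivAt_id x).prodMk (hasDerivAt_const x z)
  exact (hf (x, z)).hasFDerivAt.comp_hasDerivAt x h1

lemma contDiff_pdz {f : ℝ × ℝ → ℝ} (hf : ContDiff ℝ 2 f) : ContDiff ℝ 1 (pdz f) := by
  have h := hf.fderiv_right (m := 1) (by norm_num)
  exact (ContinuousLinearMap.apply ℝ ℝ ((0 : ℝ), (1 : ℝ))).contDiff.comp h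

lemma contDiff_pdx {f : ℝ × ℝ → ℝ} (hf : ContDiff ℝ 2 f) : ContDiff ℝ 1 (pdx f) := by
  have h := hf.fderiv_right (m := 1) (by norm_num)
  exact (ContinuousLinearMap.apply ℝ ℝ ((1 : ℝ), (0 : ℝ))).contDiff.comp h

lemma continuous_pdz1 {f : ℝ × ℝ → ℝ} (hf : ContDiff ℝ 1 f) : Continuous (pdz f) :=
  (ContinuousLinearMap.apply ℝ ℝ ((0 : ℝ), (1 : ℝ))).continuous.comp (hf.continuous_fderiv one_ne_zero)

lemma continuous_pdx1 {f : ℝ × ℝ → ℝ} (hf : ContDiff ℝ 1 f) : Continuous (pdx f) :=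
  (ContinuousLinearMap.apply ℝ ℝ ((1 : ℝ), (0 : ℝ))).continuous.comp (hf.continuous_fderiv one_ne_zero)

lemma schwarz {f : ℝ × ℝ → ℝ} (hf : ContDiff ℝ 2 f) (p : ℝ × ℝ) :
    pdx (pdz f) p = pdz (pdx f) p := by
  have hd : Differentiable ℝ f := hf.differentiable (by norm_num)
  have hd' : Differentiable ℝ (fderiv ℝ f) :=
    (hf.fderiv_right (m := 1) (by norm_num)).differentiable one_ne_zero
  have hsym := second_derivative_symmetric (f' := fderiv ℝ f)
    (f'' := fderiv ℝ (fderiv ℝ f) p) (fun y => (hd y).hasFDerivAt) (hd' p).hasFDerivAt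
  have h1 : HasFDerivAt (pdz f)
      ((ContinuousLinearMap.apply ℝ ℝ ((0:ℝ),(1:ℝ))).comp (fderiv ℝ (fderiv ℝ f) p)) p :=
    (ContinuousLinearMap.apply ℝ ℝ ((0:ℝ),(1:ℝ))).hasFDerivAt.comp p (hd' p).hasFDerivAt
  have h2 : HasFDerivAt (pdx f)
      ((ContinuousLinearMap.apply ℝ ℝ ((1:ℝ),(0:ℝ))).comp (fderiv ℝ (fderiv ℝ f) p)) p :=
    (ContinuousLinearMap.apply ℝ ℝ ((1:ℝ),(0:ℝ))).hasFDerivAt.comp p (hd' p).hasFDerivAt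
  show fderiv ℝ (pdz f) p (1,0) = fderiv ℝ (pdx f) p (0,1)
  rw [h1.fderiv, h2.fderiv]
  exact hsym (1,0) (0,1)

lemma hasDerivAt_w {u : ℝ × ℝ → ℝ} (hu : ContDiff ℝ 2 u) (x z : ℝ) :
    HasDerivAt (fun t => wOp u (x, t)) (-(pdx u (x, z))) z := by
  have hc : Continuous fun s => pdx u (x, s) :=
    (contDiff_pdx hu).continuous.comp (by continuity)
  exact intervalIntegral.integral_hasDerivAt_left (hc.intervalIntegrable _ _)
    (hc.stronglyMeasurableAtFilter _ _) hc.continuousAt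

lemma continuous_w {u : ℝ × ℝ → ℝ} (hu : ContDiff ℝ 2 u) : Continuous (wOp u) := by
  have hc : Continuous (Function.uncurry fun (p : ℝ × ℝ) (t : ℝ) => pdx u (p.1, t)) := by
    apply (contDiff_pdx hu).continuous.comp
    exact (continuous_fst.comp continuous_fst).prodMk continuous_snd
  have h2 : Continuous fun p : ℝ × ℝ => ∫ t in (0:ℝ)..p.2, pdx u (p.1, t) :=
    intervalIntegral.continuous_parametric_intervalIntegral_of_continuous
      (μ := volume) (a₀ := 0) (f := fun (p : ℝ × ℝ) (t : ℝ) => pdx u (p.1, t)) hc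
      (s := fun p : ℝ × ℝ => p.2) continuous_snd
  have : (wOp u) = fun p : ℝ × ℝ => -∫ t in (0:ℝ)..p.2, pdx u (p.1, t) := by
    funext p; rw [wOp, intervalIntegral.integral_symm]
  rw [this]
  exact h2.neg

lemma rect_int {L h : ℝ} {f : ℝ × ℝ → ℝ} (hL : 0 ≤ L) (hh : 0 ≤ h) (hf : Continuous f) :
    (∫ p in dom L h, f p) = ∫ x in (0:ℝ)..L, ∫ z in (-h)..(0:ℝ), f (x, z) := by
  have hint : IntegrableOn f (Ioo 0 L ×ˢ Ioo (-h) 0) (volume.prod volume) := by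
    rw [← Measure.volume_eq_prod]
    exact (hf.continuousOn.integrableOn_compact (isCompact_Icc.prod isCompact_Icc)).mono_set
      (prod_mono Ioo_subset_Icc_self Ioo_subset_Icc_self)
  rw [dom, Measure.volume_eq_prod, setIntegral_prod f hint]
  rw [intervalIntegral.integral_of_le hL, integral_Ioc_eq_integral_Ioo]
  refine setIntegral_congr_fun measurableSet_Ioo (fun x _ => ?_)
  rw [intervalIntegral.integral_of_le (by linarith), integral_Ioc_eq_integral_Ioo]

lemma rect_int' {L h : ℝ} {F : ℝ → ℝ → ℝ} (hL : 0 ≤ L) (hh : 0 ≤ h)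
    (hf : Continuous fun p : ℝ × ℝ => F p.1 p.2) :
    (∫ p in dom L h, F p.1 p.2) = ∫ x in (0:ℝ)..L, ∫ z in (-h)..(0:ℝ), F x z :=
  rect_int hL hh hf

lemma interval_swap {a b c d : ℝ} (hab : a ≤ b) (hcd : c ≤ d) {F : ℝ → ℝ → ℝ}
    (hF : Continuous fun p : ℝ × ℝ => F p.1 p.2) :
    ∫ x in a..b, ∫ y in c..d, F x y = ∫ y in c..d, ∫ x in a..b, F x y := by
  have hint : Integrable (Function.uncurry F)
      ((volume.restrict (Ioc a b)).prod (volume.restrict (Ioc c d))) := by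
    rw [Measure.prod_restrict, ← Measure.volume_eq_prod]
    exact (hF.continuousOn.integrableOn_compact
      ((isCompact_Icc (a := a) (b := b)).prod isCompact_Icc)).mono_set
      (prod_mono Ioc_subset_Icc_self Ioc_subset_Icc_self)
  simp only [intervalIntegral.integral_of_le hab, intervalIntegral.integral_of_le hcd]
  exact MeasureTheory.integral_integral_swap hint

end Stmt18Aux

open Stmt18Aux


theorem stmt18 (L h : ℝ) (hL : 0 < L) (hh : 0 < h) (α : ℝ) (hα : 0 < α)
    (u : ℝ × ℝ → ℝ) (hu : ContDiff ℝ 2 u)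
    (hlat : ∀ z ∈ Icc (-h) (0:ℝ), u (0, z) = 0 ∧ u (L, z) = 0)
    (hbot : ∀ x ∈ Icc (0:ℝ) L, u (x, -h) = 0)
    (hrobin : ∀ x ∈ Icc (0:ℝ) L, pdz u (x, 0) + α * u (x, 0) = 0)
    (hmean : ∀ x ∈ Icc (0:ℝ) L, (∫ z in (-h)..(0:ℝ), u (x, z)) = 0) :
    (∫ p in dom L h,
        (u p * pdx u p + wOp u p * pdz u p) * (-(Qop h (pdz (pdz u)) p))) =
      -(2 / h) * ∫ p in dom L h,
        u p * pdx u p * (α * u (p.1, 0) + pdz u (p.1, -h)) := by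
  have hud : Differentiable ℝ u := hu.differentiable (by norm_num)
  have hcu : Continuous u := hu.continuous
  have hc_ux : Continuous (pdx u) := (contDiff_pdx hu).continuous
  have hc_uz : Continuous (pdz u) := (contDiff_pdz hu).continuous
  have hd_uz : Differentiable ℝ (pdz u) := (contDiff_pdz hu).differentiable one_ne_zero
  have hd_ux : Differentiable ℝ (pdx u) := (contDiff_pdx hu).differentiable one_ne_zero
  have hc_uzz : Continuous (pdz (pdz u)) := continuous_pdz1 (contDiff_pdz hu)
  have hc_uxz : Continuous (pdx (pdz u)) := continuous_pdx1 (contDiff_pdz hu)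
  have hcw : Continuous (wOp u) := continuous_w hu
  -- slice continuity
  have cz : ∀ {g : ℝ × ℝ → ℝ}, Continuous g → ∀ x : ℝ, Continuous fun z => g (x, z) :=
    fun hg x => hg.comp (Continuous.prodMk_right x)
  have cx : ∀ {g : ℝ × ℝ → ℝ}, Continuous g → ∀ z : ℝ, Continuous fun x => g (x, z) :=
    fun hg z => hg.comp (continuous_id.prodMk continuous_const)
  -- slice derivatives
  have hz_u : ∀ x z : ℝ, HasDerivAt (fun t => u (x, t)) (pdz u (x, z)) z :=
    hasDerivAt_slice_z hud
  have hz_uz : ∀ x z : ℝ, HasDerivAt (fun t => pdz u (x, t)) (pdz (pdz u) (x, z)) z :=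
    hasDerivAt_slice_z hd_uz
  have hz_ux : ∀ x z : ℝ, HasDerivAt (fun t => pdx u (x, t)) (pdx (pdz u) (x, z)) z := by
    intro x z
    have h := hasDerivAt_slice_z hd_ux x z
    rwa [← schwarz hu] at h
  have hx_u : ∀ x z : ℝ, HasDerivAt (fun t => u (t, z)) (pdx u (x, z)) x :=
    fun x z => hasDerivAt_slice_x hud x z
  have hx_uz : ∀ x z : ℝ, HasDerivAt (fun t => pdz u (t, z)) (pdx (pdz u) (x, z)) x :=
    fun x z => hasDerivAt_slice_x hd_uz x z
  have hz_w : ∀ x z : ℝ, HasDerivAt (fun t => wOp u (x, t)) (-(pdx u (x, z))) z :=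
    hasDerivAt_w hu
  -- w at top and bottom
  have hw0 : ∀ x : ℝ, wOp u (x, 0) = 0 := by
    intro x; show (∫ s in (0:ℝ)..0, pdx u (x, s)) = 0
    simp
  have hwm : ∀ x ∈ Ioo (0:ℝ) L, wOp u (x, -h) = 0 := by
    intro x hx
    show (∫ s in (-h)..(0:ℝ), pdx u (x, s)) = 0
    set G : ℝ → ℝ := fun t => ∫ s in (-h)..(0:ℝ), pdx u (t, s) with hG
    have hGc : Continuous G := by
      apply intervalIntegral.continuous_parametric_intervalIntegral_of_continuous'
        (f := fun (t : ℝ) (s : ℝ) => pdx u (t, s))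
      exact hc_ux.comp ((continuous_fst).prodMk continuous_snd)
    have hzero : ∀ t ∈ Icc (0:ℝ) L, (∫ r in (0:ℝ)..t, G r) = 0 := by
      intro t ht
      have hswap : (∫ r in (0:ℝ)..t, ∫ s in (-h)..(0:ℝ), pdx u (r, s))
          = ∫ s in (-h)..(0:ℝ), ∫ r in (0:ℝ)..t, pdx u (r, s) := by
        apply interval_swap ht.1 (by linarith)
        exact hc_ux.comp (continuous_fst.prodMk continuous_snd)
      have hftc : ∀ s : ℝ, (∫ r in (0:ℝ)..t, pdx u (r, s)) = u (t, s) - u (0, s) := by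
        intro s
        exact intervalIntegral.integral_eq_sub_of_hasDerivAt
          (fun r _ => hx_u r s) ((cx hc_ux s).intervalIntegrable _ _)
      calc (∫ r in (0:ℝ)..t, G r) = ∫ s in (-h)..(0:ℝ), ∫ r in (0:ℝ)..t, pdx u (r, s) := hswap
        _ = ∫ s in (-h)..(0:ℝ), (u (t, s) - u (0, s)) := by
            exact intervalIntegral.integral_congr (fun s _ => hftc s)
        _ = (∫ s in (-h)..(0:ℝ), u (t, s)) - ∫ s in (-h)..(0:ℝ), u (0, s) := by
            exact intervalIntegral.integral_sub ((cz hcu t).intervalIntegrable _ _)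
              ((cz hcu 0).intervalIntegrable _ _)
        _ = 0 := by rw [hmean t ht, hmean 0 ⟨le_rfl, hL.le⟩]; ring
    have h1 : HasDerivAt (fun t => ∫ r in (0:ℝ)..t, G r) (G x) x :=
      intervalIntegral.integral_hasDerivAt_right (hGc.intervalIntegrable _ _)
        (hGc.stronglyMeasurableAtFilter _ _) hGc.continuousAt
    have h2 : (fun _ : ℝ => (0:ℝ)) =ᶠ[nhds x] (fun t => ∫ r in (0:ℝ)..t, G r) := by
      filter_upwards [Ioo_mem_nhds hx.1 hx.2] with t ht
      exact (hzero t ⟨ht.1.le, ht.2.le⟩).symm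
    have h3 : HasDerivAt (fun _ : ℝ => (0:ℝ)) (G x) x := h1.congr_of_eventuallyEq h2
    exact ((hasDerivAt_const x (0:ℝ)).unique h3).symm
  -- the Q average
  have hQint : ∀ x ∈ Icc (0:ℝ) L,
      (∫ s in (-h)..(0:ℝ), pdz (pdz u) (x, s))
        = -(α * u (x, 0) + pdz u (x, -h)) := by
    intro x hx
    have h1 : (∫ s in (-h)..(0:ℝ), pdz (pdz u) (x, s)) = pdz u (x, 0) - pdz u (x, -h) :=
      intervalIntegral.integral_eq_sub_of_hasDerivAt (fun s _ => hz_uz x s)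
        ((cz hc_uzz x).intervalIntegrable _ _)
    have h2 := hrobin x hx
    rw [h1]; linarith
  -- integration by parts lemmas (fixed x)
  have ibp1 : ∀ x ∈ Icc (0:ℝ) L,
      (∫ z in (-h)..(0:ℝ), (u (x, z) * pdx u (x, z)) * pdz (pdz u) (x, z))
        = -(α * u (x, 0) ^ 2 * pdx u (x, 0))
          - ∫ z in (-h)..(0:ℝ),
              (pdz u (x, z) * pdx u (x, z) + u (x, z) * pdx (pdz u) (x, z)) * pdz u (x, z) := by
    intro x hx
    have h1 : (∫ z in (-h)..(0:ℝ), (u (x, z) * pdx u (x, z)) * pdz (pdz u) (x, z))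
        = (u (x, 0) * pdx u (x, 0)) * pdz u (x, 0)
          - (u (x, -h) * pdx u (x, -h)) * pdz u (x, -h)
          - ∫ z in (-h)..(0:ℝ),
              (pdz u (x, z) * pdx u (x, z) + u (x, z) * pdx (pdz u) (x, z)) * pdz u (x, z) :=
      intervalIntegral.integral_mul_deriv_eq_deriv_mul
        (fun z _ => (hz_u x z).mul (hz_ux x z)) (fun z _ => hz_uz x z)
        ((((cz hc_uz x).mul (cz hc_ux x)).add
          ((cz hcu x).mul (cz hc_uxz x))).intervalIntegrable _ _)
        ((cz hc_uzz x).intervalIntegrable _ _)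
    have h2 := hrobin x hx
    have h3 : pdz u (x, 0) = -(α * u (x, 0)) := by linarith
    rw [h1, hbot x hx, h3]; ring
  have ibp2 : ∀ x ∈ Ioo (0:ℝ) L,
      (∫ z in (-h)..(0:ℝ), wOp u (x, z) * (pdz u (x, z) * pdz (pdz u) (x, z)))
        = ∫ z in (-h)..(0:ℝ), pdx u (x, z) * (pdz u (x, z) ^ 2 / 2) := by
    intro x hx
    have hv : ∀ z ∈ uIcc (-h) (0:ℝ),
        HasDerivAt (fun z => pdz u (x, z) ^ 2 / 2)
          (pdz u (x, z) * pdz (pdz u) (x, z)) z := by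
      intro z _
      have h := ((hz_uz x z).fun_pow 2).div_const 2
      convert h using 1
      all_goals first | rfl | ring | (norm_num; ring)
    have h1 : (∫ z in (-h)..(0:ℝ), wOp u (x, z) * (pdz u (x, z) * pdz (pdz u) (x, z)))
        = wOp u (x, 0) * (pdz u (x, 0) ^ 2 / 2)
          - wOp u (x, -h) * (pdz u (x, -h) ^ 2 / 2)
          - ∫ z in (-h)..(0:ℝ), (-(pdx u (x, z))) * (pdz u (x, z) ^ 2 / 2) :=
      intervalIntegral.integral_mul_deriv_eq_deriv_mul
        (fun z _ => hz_w x z) hv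
        (((cz hc_ux x).neg).intervalIntegrable _ _)
        (((cz hc_uz x).mul (cz hc_uzz x)).intervalIntegrable _ _)
    rw [h1, hw0 x, hwm x hx,
      show (0:ℝ) * (pdz u (x,0) ^2/2) - 0 * (pdz u (x,-h)^2/2) = 0 by ring, zero_sub,
      ← intervalIntegral.integral_neg]
    exact intervalIntegral.integral_congr (fun z _ => by ring)
  have ibp3 : ∀ x ∈ Icc (0:ℝ) L,
      (∫ z in (-h)..(0:ℝ), wOp u (x, z) * pdz u (x, z))
        = ∫ z in (-h)..(0:ℝ), u (x, z) * pdx u (x, z) := by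
    intro x hx
    have h1 : (∫ z in (-h)..(0:ℝ), wOp u (x, z) * pdz u (x, z))
        = wOp u (x, 0) * u (x, 0) - wOp u (x, -h) * u (x, -h)
          - ∫ z in (-h)..(0:ℝ), (-(pdx u (x, z))) * u (x, z) :=
      intervalIntegral.integral_mul_deriv_eq_deriv_mul
        (fun z _ => hz_w x z) (fun z _ => hz_u x z)
        (((cz hc_ux x).neg).intervalIntegrable _ _)
        ((cz hc_uz x).intervalIntegrable _ _)
    rw [h1, hw0 x, hbot x hx,
      show (0:ℝ) * u (x, 0) - wOp u (x, -h) * 0 = 0 by ring, zero_sub,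
      ← intervalIntegral.integral_neg]
    exact intervalIntegral.integral_congr (fun z _ => by ring)
  -- outer FTC pieces
  have hG1 : (∫ x in (0:ℝ)..L, α * u (x, 0) ^ 2 * pdx u (x, 0)) = 0 := by
    have hft : ∀ x ∈ uIcc (0:ℝ) L, HasDerivAt (fun t => α * u (t, 0) ^ 3 / 3)
        (α * u (x, 0) ^ 2 * pdx u (x, 0)) x := by
      intro x _
      have h2 := (((hx_u x 0).fun_pow 3).const_mul α).div_const 3
      convert h2 using 1
      norm_num
      all_goals first | rfl | ring | (norm_num; ring)
    rw [intervalIntegral.integral_eq_sub_of_hasDerivAt hft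
      (((continuous_const.mul ((cx hcu 0).pow 2)).mul (cx hc_ux 0)).intervalIntegrable _ _)]
    have h0 : (0:ℝ) ∈ Icc (-h) (0:ℝ) := ⟨by linarith, le_rfl⟩
    rw [(hlat 0 h0).1, (hlat 0 h0).2]
    norm_num
  have hg2cont : Continuous (fun p : ℝ × ℝ =>
      pdx u p * pdz u p ^ 2 / 2 + u p * pdx (pdz u) p * pdz u p) :=
    ((hc_ux.mul (hc_uz.pow 2)).div_const 2).add ((hcu.mul hc_uxz).mul hc_uz)
  have hG2 : (∫ x in (0:ℝ)..L, ∫ z in (-h)..(0:ℝ),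
      (pdx u (x, z) * pdz u (x, z) ^ 2 / 2
        + u (x, z) * pdx (pdz u) (x, z) * pdz u (x, z))) = 0 := by
    have hswap := interval_swap (a := 0) (b := L) (c := -h) (d := 0)
      (F := fun x z => pdx u (x, z) * pdz u (x, z) ^ 2 / 2
        + u (x, z) * pdx (pdz u) (x, z) * pdz u (x, z))
      hL.le (by linarith) (by exact hg2cont)
    rw [hswap]
    have hinner : ∀ z ∈ uIcc (-h) (0:ℝ), (∫ x in (0:ℝ)..L,
        (pdx u (x, z) * pdz u (x, z) ^ 2 / 2
          + u (x, z) * pdx (pdz u) (x, z) * pdz u (x, z))) = (0:ℝ) := by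
      intro z hz
      rw [uIcc_of_le (by linarith : (-h) ≤ (0:ℝ))] at hz
      have hft : ∀ x ∈ uIcc (0:ℝ) L, HasDerivAt (fun t => u (t, z) * pdz u (t, z) ^ 2 / 2)
          (pdx u (x, z) * pdz u (x, z) ^ 2 / 2
            + u (x, z) * pdx (pdz u) (x, z) * pdz u (x, z)) x := by
        intro x _
        have h2 := ((hx_u x z).fun_mul ((hx_uz x z).fun_pow 2)).div_const 2
        convert h2 using 1
        norm_num
        all_goals first | rfl | ring | (norm_num; ring)
      rw [intervalIntegral.integral_eq_sub_of_hasDerivAt hft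
        (((((cx hc_ux z).mul ((cx hc_uz z).pow 2)).div_const 2).add
          (((cx hcu z).mul (cx hc_uxz z)).mul (cx hc_uz z))).intervalIntegrable _ _)]
      rw [(hlat z hz).1, (hlat z hz).2]
      ring
    rw [intervalIntegral.integral_congr (g := fun _ => (0:ℝ)) hinner]
    simp
  -- the inner z-integral identity on the interior
  have inner_eq : ∀ x ∈ Ioo (0:ℝ) L,
      (∫ z in (-h)..(0:ℝ), (u (x, z) * pdx u (x, z) + wOp u (x, z) * pdz u (x, z))
          * (-(pdz (pdz u) (x, z)) - 1 / h * (α * u (x, 0) + pdz u (x, -h))))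
        = α * u (x, 0) ^ 2 * pdx u (x, 0)
          + (∫ z in (-h)..(0:ℝ), (pdx u (x, z) * pdz u (x, z) ^ 2 / 2
              + u (x, z) * pdx (pdz u) (x, z) * pdz u (x, z)))
          + (-(2 / h) * ((∫ z in (-h)..(0:ℝ), u (x, z) * pdx u (x, z))
              * (α * u (x, 0) + pdz u (x, -h)))) := by
    intro x hx
    have hxI : x ∈ Icc (0:ℝ) L := ⟨hx.1.le, hx.2.le⟩
    have iiP1 : IntervalIntegrable
        (fun z => (u (x, z) * pdx u (x, z)) * pdz (pdz u) (x, z)) volume (-h) 0 :=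
      (((cz hcu x).mul (cz hc_ux x)).mul (cz hc_uzz x)).intervalIntegrable _ _
    have iiP2 : IntervalIntegrable
        (fun z => wOp u (x, z) * (pdz u (x, z) * pdz (pdz u) (x, z))) volume (-h) 0 :=
      ((cz hcw x).mul ((cz hc_uz x).mul (cz hc_uzz x))).intervalIntegrable _ _
    have iiP3 : IntervalIntegrable (fun z => u (x, z) * pdx u (x, z)) volume (-h) 0 :=
      ((cz hcu x).mul (cz hc_ux x)).intervalIntegrable _ _
    have iiP4 : IntervalIntegrable (fun z => wOp u (x, z) * pdz u (x, z)) volume (-h) 0 :=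
      ((cz hcw x).mul (cz hc_uz x)).intervalIntegrable _ _
    have e1 : (∫ z in (-h)..(0:ℝ), (u (x, z) * pdx u (x, z) + wOp u (x, z) * pdz u (x, z))
          * (-(pdz (pdz u) (x, z)) - 1 / h * (α * u (x, 0) + pdz u (x, -h))))
        = (∫ z in (-h)..(0:ℝ), (-((u (x, z) * pdx u (x, z)) * pdz (pdz u) (x, z))
            + -(wOp u (x, z) * (pdz u (x, z) * pdz (pdz u) (x, z)))))
          + ∫ z in (-h)..(0:ℝ),
            ((-(1 / h) * (α * u (x, 0) + pdz u (x, -h))) * (u (x, z) * pdx u (x, z))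
              + (-(1 / h) * (α * u (x, 0) + pdz u (x, -h))) * (wOp u (x, z) * pdz u (x, z))) := by
      have hAi : IntervalIntegrable (fun z => -((u (x, z) * pdx u (x, z)) * pdz (pdz u) (x, z))
          + -(wOp u (x, z) * (pdz u (x, z) * pdz (pdz u) (x, z)))) volume (-h) 0 :=
        (((((cz hcu x).mul (cz hc_ux x)).mul (cz hc_uzz x)).neg).add
          (((cz hcw x).mul ((cz hc_uz x).mul (cz hc_uzz x))).neg)).intervalIntegrable _ _
      have hBi : IntervalIntegrable
          (fun z => (-(1 / h) * (α * u (x, 0) + pdz u (x, -h))) * (u (x, z) * pdx u (x, z))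
            + (-(1 / h) * (α * u (x, 0) + pdz u (x, -h))) * (wOp u (x, z) * pdz u (x, z)))
          volume (-h) 0 :=
        ((continuous_const.mul ((cz hcu x).mul (cz hc_ux x))).add
          (continuous_const.mul ((cz hcw x).mul (cz hc_uz x)))).intervalIntegrable _ _
      rw [← intervalIntegral.integral_add hAi hBi]
      exact intervalIntegral.integral_congr (fun z _ => by ring)
    have e2 : (∫ z in (-h)..(0:ℝ), (-((u (x, z) * pdx u (x, z)) * pdz (pdz u) (x, z))
          + -(wOp u (x, z) * (pdz u (x, z) * pdz (pdz u) (x, z)))))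
        = -(∫ z in (-h)..(0:ℝ), (u (x, z) * pdx u (x, z)) * pdz (pdz u) (x, z))
          + -(∫ z in (-h)..(0:ℝ), wOp u (x, z) * (pdz u (x, z) * pdz (pdz u) (x, z))) := by
      have h1i : IntervalIntegrable
          (fun z => -((u (x, z) * pdx u (x, z)) * pdz (pdz u) (x, z))) volume (-h) 0 :=
        ((((cz hcu x).mul (cz hc_ux x)).mul (cz hc_uzz x)).neg).intervalIntegrable _ _
      have h2i : IntervalIntegrable
          (fun z => -(wOp u (x, z) * (pdz u (x, z) * pdz (pdz u) (x, z)))) volume (-h) 0 :=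
        (((cz hcw x).mul ((cz hc_uz x).mul (cz hc_uzz x))).neg).intervalIntegrable _ _
      rw [intervalIntegral.integral_add h1i h2i,
        intervalIntegral.integral_neg, intervalIntegral.integral_neg]
    have e3 : (∫ z in (-h)..(0:ℝ),
          ((-(1 / h) * (α * u (x, 0) + pdz u (x, -h))) * (u (x, z) * pdx u (x, z))
            + (-(1 / h) * (α * u (x, 0) + pdz u (x, -h))) * (wOp u (x, z) * pdz u (x, z))))
        = (-(1 / h) * (α * u (x, 0) + pdz u (x, -h)))
            * (∫ z in (-h)..(0:ℝ), u (x, z) * pdx u (x, z))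
          + (-(1 / h) * (α * u (x, 0) + pdz u (x, -h)))
            * ∫ z in (-h)..(0:ℝ), wOp u (x, z) * pdz u (x, z) := by
      have h3i : IntervalIntegrable
          (fun z => (-(1 / h) * (α * u (x, 0) + pdz u (x, -h))) * (u (x, z) * pdx u (x, z)))
          volume (-h) 0 :=
        (continuous_const.mul ((cz hcu x).mul (cz hc_ux x))).intervalIntegrable _ _
      have h4i : IntervalIntegrable
          (fun z => (-(1 / h) * (α * u (x, 0) + pdz u (x, -h))) * (wOp u (x, z) * pdz u (x, z)))
          volume (-h) 0 :=
        (continuous_const.mul ((cz hcw x).mul (cz hc_uz x))).intervalIntegrable _ _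
      rw [intervalIntegral.integral_add h3i h4i,
        intervalIntegral.integral_const_mul, intervalIntegral.integral_const_mul]
    have hcomb : (∫ z in (-h)..(0:ℝ),
          (pdz u (x, z) * pdx u (x, z) + u (x, z) * pdx (pdz u) (x, z)) * pdz u (x, z))
          - (∫ z in (-h)..(0:ℝ), pdx u (x, z) * (pdz u (x, z) ^ 2 / 2))
        = ∫ z in (-h)..(0:ℝ), (pdx u (x, z) * pdz u (x, z) ^ 2 / 2
            + u (x, z) * pdx (pdz u) (x, z) * pdz u (x, z)) := by
      rw [← intervalIntegral.integral_sub
        (by exact (((cz hc_uz x).mul (cz hc_ux x)).add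
          ((cz hcu x).mul (cz hc_uxz x))).mul (cz hc_uz x) |>.intervalIntegrable _ _)
        (by exact ((cz hc_ux x).mul (((cz hc_uz x).pow 2).div_const 2)).intervalIntegrable _ _)]
      exact intervalIntegral.integral_congr (fun z _ => by ring)
    rw [e1, e2, e3, ibp1 x hxI, ibp2 x hx, ibp3 x hxI, ← hcomb]
    ring
  -- continuity of the auxiliary lateral-boundary function
  have ca : Continuous fun p : ℝ × ℝ => α * u (p.1, 0) + pdz u (p.1, -h) :=
    (continuous_const.mul (hcu.comp (continuous_fst.prodMk continuous_const))).add
      (hc_uz.comp (continuous_fst.prodMk continuous_const))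
  have mdom : MeasurableSet (dom L h) := measurableSet_Ioo.prod measurableSet_Ioo
  -- replace Q by its computed value
  have key : EqOn
      (fun p : ℝ × ℝ => (u p * pdx u p + wOp u p * pdz u p) * (-(Qop h (pdz (pdz u)) p)))
      (fun p : ℝ × ℝ => (u p * pdx u p + wOp u p * pdz u p)
        * (-(pdz (pdz u) p) - 1 / h * (α * u (p.1, 0) + pdz u (p.1, -h)))) (dom L h) := by
    intro p hp
    obtain ⟨hp1, hp2⟩ := hp
    have hx : p.1 ∈ Icc (0:ℝ) L := ⟨hp1.1.le, hp1.2.le⟩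
    simp only [Qop, hQint p.1 hx]
    ring
  have h_lhs : (∫ p in dom L h,
        (u p * pdx u p + wOp u p * pdz u p) * (-(Qop h (pdz (pdz u)) p)))
      = ∫ p in dom L h, (u p * pdx u p + wOp u p * pdz u p)
          * (-(pdz (pdz u) p) - 1 / h * (α * u (p.1, 0) + pdz u (p.1, -h))) :=
    setIntegral_congr_fun mdom key
  have hFcont : Continuous fun p : ℝ × ℝ => (u p * pdx u p + wOp u p * pdz u p)
      * (-(pdz (pdz u) p) - 1 / h * (α * u (p.1, 0) + pdz u (p.1, -h))) :=
    ((hcu.mul hc_ux).add (hcw.mul hc_uz)).mul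
      ((hc_uzz.neg).sub (continuous_const.mul ca))
  have h_rect : (∫ p in dom L h, (u p * pdx u p + wOp u p * pdz u p)
        * (-(pdz (pdz u) p) - 1 / h * (α * u (p.1, 0) + pdz u (p.1, -h))))
      = ∫ x in (0:ℝ)..L, ∫ z in (-h)..(0:ℝ),
          (u (x, z) * pdx u (x, z) + wOp u (x, z) * pdz u (x, z))
            * (-(pdz (pdz u) (x, z)) - 1 / h * (α * u (x, 0) + pdz u (x, -h))) :=
    rect_int' (F := fun x z => (u (x, z) * pdx u (x, z) + wOp u (x, z) * pdz u (x, z))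
      * (-(pdz (pdz u) (x, z)) - 1 / h * (α * u (x, 0) + pdz u (x, -h))))
      hL.le hh.le (by exact hFcont)
  have h_outer : (∫ x in (0:ℝ)..L, ∫ z in (-h)..(0:ℝ),
        (u (x, z) * pdx u (x, z) + wOp u (x, z) * pdz u (x, z))
          * (-(pdz (pdz u) (x, z)) - 1 / h * (α * u (x, 0) + pdz u (x, -h))))
      = ∫ x in (0:ℝ)..L,
          (α * u (x, 0) ^ 2 * pdx u (x, 0)
            + (∫ z in (-h)..(0:ℝ), (pdx u (x, z) * pdz u (x, z) ^ 2 / 2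
                + u (x, z) * pdx (pdz u) (x, z) * pdz u (x, z)))
            + (-(2 / h) * ((∫ z in (-h)..(0:ℝ), u (x, z) * pdx u (x, z))
                * (α * u (x, 0) + pdz u (x, -h))))) := by
    rw [intervalIntegral.integral_of_le hL.le, intervalIntegral.integral_of_le hL.le,
      integral_Ioc_eq_integral_Ioo, integral_Ioc_eq_integral_Ioo]
    exact setIntegral_congr_fun measurableSet_Ioo (fun x hx => inner_eq x hx)
  have cparam : Continuous fun x : ℝ => ∫ z in (-h)..(0:ℝ), u (x, z) * pdx u (x, z) := by
    apply intervalIntegral.continuous_parametric_intervalIntegral_of_continuous'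
      (f := fun (x : ℝ) (z : ℝ) => u (x, z) * pdx u (x, z))
    exact (hcu.mul hc_ux).comp (continuous_fst.prodMk continuous_snd)
  have cparam2 : Continuous fun x : ℝ => ∫ z in (-h)..(0:ℝ),
      (pdx u (x, z) * pdz u (x, z) ^ 2 / 2 + u (x, z) * pdx (pdz u) (x, z) * pdz u (x, z)) := by
    apply intervalIntegral.continuous_parametric_intervalIntegral_of_continuous'
      (f := fun (x : ℝ) (z : ℝ) => pdx u (x, z) * pdz u (x, z) ^ 2 / 2
        + u (x, z) * pdx (pdz u) (x, z) * pdz u (x, z))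
    exact hg2cont.comp (continuous_fst.prodMk continuous_snd)
  have cA : Continuous fun x : ℝ => α * u (x, 0) + pdz u (x, -h) :=
    (continuous_const.mul (cx hcu 0)).add (cx hc_uz (-h))
  have h_split : (∫ x in (0:ℝ)..L,
        (α * u (x, 0) ^ 2 * pdx u (x, 0)
          + (∫ z in (-h)..(0:ℝ), (pdx u (x, z) * pdz u (x, z) ^ 2 / 2
              + u (x, z) * pdx (pdz u) (x, z) * pdz u (x, z)))
          + (-(2 / h) * ((∫ z in (-h)..(0:ℝ), u (x, z) * pdx u (x, z))
              * (α * u (x, 0) + pdz u (x, -h))))))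
      = (∫ x in (0:ℝ)..L, α * u (x, 0) ^ 2 * pdx u (x, 0))
        + (∫ x in (0:ℝ)..L, ∫ z in (-h)..(0:ℝ), (pdx u (x, z) * pdz u (x, z) ^ 2 / 2
            + u (x, z) * pdx (pdz u) (x, z) * pdz u (x, z)))
        + ∫ x in (0:ℝ)..L, (-(2 / h) * ((∫ z in (-h)..(0:ℝ), u (x, z) * pdx u (x, z))
            * (α * u (x, 0) + pdz u (x, -h)))) := by
    rw [intervalIntegral.integral_add
      (by exact (((continuous_const.mul ((cx hcu 0).pow 2)).mul (cx hc_ux 0)).add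
        cparam2).intervalIntegrable _ _)
      (by exact (continuous_const.mul (cparam.mul cA)).intervalIntegrable _ _),
      intervalIntegral.integral_add
      (by exact ((continuous_const.mul ((cx hcu 0).pow 2)).mul (cx hc_ux 0)).intervalIntegrable _ _)
      (by exact cparam2.intervalIntegrable _ _)]
  have h_rhs : (∫ p in dom L h, u p * pdx u p * (α * u (p.1, 0) + pdz u (p.1, -h)))
      = ∫ x in (0:ℝ)..L, ∫ z in (-h)..(0:ℝ),
          u (x, z) * pdx u (x, z) * (α * u (x, 0) + pdz u (x, -h)) :=
    rect_int' (F := fun x z => u (x, z) * pdx u (x, z) * (α * u (x, 0) + pdz u (x, -h)))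
      hL.le hh.le (by exact (hcu.mul hc_ux).mul ca)
  have h_pull : ∀ x : ℝ, (∫ z in (-h)..(0:ℝ),
        u (x, z) * pdx u (x, z) * (α * u (x, 0) + pdz u (x, -h)))
      = (∫ z in (-h)..(0:ℝ), u (x, z) * pdx u (x, z)) * (α * u (x, 0) + pdz u (x, -h)) :=
    fun x => intervalIntegral.integral_mul_const _ _
  rw [h_lhs, h_rect, h_outer, h_split, hG1, hG2, h_rhs]
  simp only [h_pull]
  rw [← intervalIntegral.integral_const_mul, zero_add, zero_add]
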